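/- Exactness of the weight-graded functor Gr^W_n: let f : A → B and g : B → C be morphisms of mixed Hodge structures with range(f) = ker(g) as subspaces of B. Then for every integer n, the induced linear maps Gr^W_n(f) : Gr^W_n A → Gr^W_n B and Gr^W_n(g) : Gr^W_n B → Gr^W_n C (where Gr^W_n X := W_n X / W_{n-1} X and the induced map sends the class of x to the class of its image) satisfy range(Gr^W_n(f)) = ker(Gr^W_n(g)). -/

import Mathlib

open scoped TensorProduct

private lemma sigmaC_aux (V : Type*) [AddCommGroup V] [Module ℝ V] (c : ℂ) (x : ℂ ⊗[ℝ] V) :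
    TensorProduct.map Complex.conjAe.toLinearMap LinearMap.id (c • x) =
      (starRingEnd ℂ) c • TensorProduct.map Complex.conjAe.toLinearMap LinearMap.id x := by
  induction x using TensorProduct.induction_on with
  | zero => simp
  | tmul z v => simp [TensorProduct.smul_tmul', smul_eq_mul, map_mul]
  | add x y hx hy => simp only [smul_add, map_add, hx, hy]

/-- The conjugation involution `σ` of the complexification `ℂ ⊗[ℝ] V`,
as a `conj`-semilinear map. -/
noncomputable def sigmaC (V : Type*) [AddCommGroup V] [Module ℝ V] :
    (ℂ ⊗[ℝ] V) →ₛₗ[starRingEnd ℂ] (ℂ ⊗[ℝ] V) where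
  toFun := TensorProduct.map Complex.conjAe.toLinearMap LinearMap.id
  map_add' x y := map_add _ x y
  map_smul' c x := sigmaC_aux V c x

section Basic
variable {V : Type*} [AddCommGroup V] [Module ℝ V]

lemma sigmaC_tmul (z : ℂ) (v : V) : sigmaC V (z ⊗ₜ[ℝ] v) = (starRingEnd ℂ) z ⊗ₜ[ℝ] v := rfl

lemma sigmaC_sigmaC (x : ℂ ⊗[ℝ] V) : sigmaC V (sigmaC V x) = x := by
  induction x using TensorProduct.induction_on with
  | zero => simp
  | tmul z v => simp [sigmaC_tmul]
  | add x y hx hy => rw [map_add, map_add, hx, hy]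

lemma baseChange_mono {p q : Submodule ℝ V} (h : p ≤ q) :
    p.baseChange ℂ ≤ q.baseChange ℂ :=
  Submodule.baseChange_mono (A := ℂ) h

lemma sigmaC_mem_baseChange {p : Submodule ℝ V} {x : ℂ ⊗[ℝ] V} (hx : x ∈ p.baseChange ℂ) :
    sigmaC V x ∈ p.baseChange ℂ := by
  rw [Submodule.baseChange_eq_span] at hx
  induction hx using Submodule.span_induction with
  | mem y hy =>
    obtain ⟨v, hv, rfl⟩ := hy
    exact Submodule.tmul_mem_baseChange_of_mem _ hv
  | zero => simp
  | add a b _ _ ha hb => rw [map_add]; exact add_mem ha hb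
  | smul c a _ ha => rw [map_smulₛₗ]; exact Submodule.smul_mem _ _ ha

lemma mem_baseChange_iff_exists {p : Submodule ℝ V} {x : ℂ ⊗[ℝ] V} :
    x ∈ p.baseChange ℂ ↔ ∃ v ∈ p, ∃ w ∈ p, x = 1 ⊗ₜ[ℝ] v + Complex.I ⊗ₜ[ℝ] w := by
  constructor
  · intro hx
    rw [Submodule.baseChange_eq_span] at hx
    induction hx using Submodule.span_induction with
    | mem y hy =>
      obtain ⟨v, hv, rfl⟩ := hy
      exact ⟨v, hv, 0, zero_mem _, by simp⟩
    | zero => exact ⟨0, zero_mem _, 0, zero_mem _, by simp⟩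
    | add a b _ _ ha hb =>
      obtain ⟨v, hv, w, hw, rfl⟩ := ha
      obtain ⟨v', hv', w', hw', rfl⟩ := hb
      refine ⟨v + v', add_mem hv hv', w + w', add_mem hw hw', ?_⟩
      rw [TensorProduct.tmul_add, TensorProduct.tmul_add]
      abel
    | smul c a _ ha =>
      obtain ⟨v, hv, w, hw, rfl⟩ := ha
      refine ⟨c.re • v - c.im • w, sub_mem (Submodule.smul_mem _ _ hv) (Submodule.smul_mem _ _ hw),
        c.im • v + c.re • w, add_mem (Submodule.smul_mem _ _ hv) (Submodule.smul_mem _ _ hw), ?_⟩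
      have hI : ∀ u : V, Complex.I ⊗ₜ[ℝ] u = Complex.I • ((1:ℂ) ⊗ₜ[ℝ] u) := by
        intro u; rw [TensorProduct.smul_tmul', smul_eq_mul, mul_one]
      rw [TensorProduct.tmul_sub, TensorProduct.tmul_add, TensorProduct.tmul_smul,
        TensorProduct.tmul_smul, TensorProduct.tmul_smul, TensorProduct.tmul_smul, hI, hI]
      match_scalars
      · simp [Complex.ext_iff]
      · simp [Complex.ext_iff]
  · rintro ⟨v, hv, w, hw, rfl⟩
    exact add_mem (Submodule.tmul_mem_baseChange_of_mem _ hv)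
      (Submodule.tmul_mem_baseChange_of_mem _ hw)

end Basic

/-- A mixed Hodge structure on a real vector space `V`: an increasing, bounded, exhaustive
weight filtration `W` of `V` by real subspaces and a decreasing, bounded, exhaustive Hodge
filtration `F` of `V_ℂ = ℂ ⊗[ℝ] V` by complex subspaces, such that for every `n` the
filtration induced by `F` on `Gr^W_n = W_n / W_{n-1}` is a Hodge filtration of weight `n`.

Identifying the complexification of `Gr^W_n` with `(W_n)_ℂ / (W_{n-1})_ℂ` (where
`(W_n)_ℂ := (W n).baseChange ℂ ⊆ V_ℂ`), the Hodge filtration condition of weight `n` on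
`Gr^W_n` — namely `F^p(Gr^W_n)_ℂ ⊕ σ(F^{n-p+1}(Gr^W_n)_ℂ) = (Gr^W_n)_ℂ` for all `p`, where
`F^p(Gr^W_n)_ℂ` is the image of `F^p ⊓ (W_n)_ℂ` — is expressed below by pulling back along
the quotient map `(W_n)_ℂ → (W_n)_ℂ / (W_{n-1})_ℂ`: the first displayed equation is the
disjointness of the two images in the quotient, the second their spanning of the quotient. -/
def IsMixedHodgeStructure (V : Type*) [AddCommGroup V] [Module ℝ V]
    (W : ℤ → Submodule ℝ V) (F : ℤ → Submodule ℂ (ℂ ⊗[ℝ] V)) : Prop :=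
  Monotone W ∧
  (∃ a : ℤ, ∀ n ≤ a, W n = ⊥) ∧
  (∃ b : ℤ, ∀ n ≥ b, W n = ⊤) ∧
  (∀ p : ℤ, F (p + 1) ≤ F p) ∧
  (∃ a : ℤ, ∀ p ≤ a, F p = ⊤) ∧
  (∃ b : ℤ, ∀ p ≥ b, F p = ⊥) ∧
  (∀ n p : ℤ,
    ((F p ⊓ (W n).baseChange ℂ) ⊔ (W (n - 1)).baseChange ℂ) ⊓
        (((F (n - p + 1) ⊓ (W n).baseChange ℂ).map (sigmaC V)) ⊔ (W (n - 1)).baseChange ℂ)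
      = (W (n - 1)).baseChange ℂ ∧
    (F p ⊓ (W n).baseChange ℂ) ⊔ ((F (n - p + 1) ⊓ (W n).baseChange ℂ).map (sigmaC V))
        ⊔ (W (n - 1)).baseChange ℂ
      = (W n).baseChange ℂ)

section Deligne
variable {V : Type*} [AddCommGroup V] [Module ℝ V]
variable (W : ℤ → Submodule ℝ V) (F : ℤ → Submodule ℂ (ℂ ⊗[ℝ] V))

/-- Deligne's subspace `I^{p,q}` with `q := n - p`. -/
noncomputable def Ide (n p : ℤ) : Submodule ℂ (ℂ ⊗[ℝ] V) :=
  F p ⊓ (W n).baseChange ℂ ⊓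
    ((F (n - p) ⊓ (W n).baseChange ℂ).map (sigmaC V) ⊔
      ⨆ j : ℤ, ⨆ _ : 2 ≤ j, (F (n - p - j + 1) ⊓ (W (n - j)).baseChange ℂ).map (sigmaC V))

noncomputable def Usub (n : ℤ) : Submodule ℂ (ℂ ⊗[ℝ] V) := ⨆ p : ℤ, Ide W F n p

noncomputable def Tsub (n : ℤ) : Submodule ℂ (ℂ ⊗[ℝ] V) :=
  ⨆ m : ℤ, ⨆ _ : n ≤ m, Usub W F m

variable {W F}

lemma mhs_fanti (h : IsMixedHodgeStructure V W F) : Antitone F :=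
  antitone_int_of_succ_le h.2.2.2.1

lemma mhs_d1 (h : IsMixedHodgeStructure V W F) (n p : ℤ) :
    ((F p ⊓ (W n).baseChange ℂ) ⊔ (W (n - 1)).baseChange ℂ) ⊓
        (((F (n - p + 1) ⊓ (W n).baseChange ℂ).map (sigmaC V)) ⊔ (W (n - 1)).baseChange ℂ)
      = (W (n - 1)).baseChange ℂ :=
  (h.2.2.2.2.2.2 n p).1

lemma mhs_d2 (h : IsMixedHodgeStructure V W F) (n p : ℤ) :
    (F p ⊓ (W n).baseChange ℂ) ⊔ ((F (n - p + 1) ⊓ (W n).baseChange ℂ).map (sigmaC V))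
        ⊔ (W (n - 1)).baseChange ℂ
      = (W n).baseChange ℂ :=
  (h.2.2.2.2.2.2 n p).2

lemma wc_mono (h : IsMixedHodgeStructure V W F) {m n : ℤ} (hmn : m ≤ n) :
    (W m).baseChange ℂ ≤ (W n).baseChange ℂ :=
  baseChange_mono (h.1 hmn)

lemma map_sigma_le_baseChange {p : Submodule ℝ V} {X : Submodule ℂ (ℂ ⊗[ℝ] V)}
    (hX : X ≤ p.baseChange ℂ) : X.map (sigmaC V) ≤ p.baseChange ℂ := by
  rintro x ⟨z, hz, rfl⟩
  exact sigmaC_mem_baseChange (hX hz)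

lemma map_sigma_inf_wc (X : Submodule ℂ (ℂ ⊗[ℝ] V)) (p : Submodule ℝ V) :
    X.map (sigmaC V) ⊓ p.baseChange ℂ ≤ (X ⊓ p.baseChange ℂ).map (sigmaC V) := by
  rintro x ⟨⟨z, hz, rfl⟩, hx2⟩
  refine ⟨z, ⟨hz, ?_⟩, rfl⟩
  have := sigmaC_mem_baseChange hx2
  rwa [sigmaC_sigmaC] at this

lemma Ide_le_F (n p : ℤ) : Ide W F n p ≤ F p := inf_le_left.trans inf_le_left

lemma Ide_le_Wc (n p : ℤ) : Ide W F n p ≤ (W n).baseChange ℂ := inf_le_left.trans inf_le_right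

lemma Ide_le_sigma_sup (h : IsMixedHodgeStructure V W F) (n p : ℤ) :
    Ide W F n p ≤ (F (n - p) ⊓ (W n).baseChange ℂ).map (sigmaC V) ⊔ (W (n - 1)).baseChange ℂ := by
  refine inf_le_right.trans (sup_le le_sup_left ?_)
  refine (iSup₂_le fun j hj => ?_).trans le_sup_right
  exact (map_sigma_le_baseChange inf_le_right).trans (wc_mono h (by omega))

/-- Key lemma: every element of `W_m`, `m ≤ n-1`, decomposes. -/
lemma key_lemma (h : IsMixedHodgeStructure V W F) (n p : ℤ) :
    ∀ m : ℤ, m ≤ n - 1 → (W m).baseChange ℂ ≤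
      (F p ⊓ (W (n - 1)).baseChange ℂ) ⊔
        ⨆ j : ℤ, ⨆ _ : 1 ≤ j, (F (n - p - j + 1) ⊓ (W (n - j)).baseChange ℂ).map (sigmaC V) := by
  obtain ⟨aW, haW⟩ := h.2.1
  suffices H : ∀ k : ℕ, ∀ m : ℤ, m ≤ n - 1 → m ≤ aW + k → (W m).baseChange ℂ ≤
      (F p ⊓ (W (n - 1)).baseChange ℂ) ⊔
        ⨆ j : ℤ, ⨆ _ : 1 ≤ j, (F (n - p - j + 1) ⊓ (W (n - j)).baseChange ℂ).map (sigmaC V) by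
    intro m hm
    exact H (m - aW).toNat m hm (by omega)
  intro k
  induction k with
  | zero =>
    intro m hm hm2
    rw [haW m (by omega), Submodule.baseChange_bot]
    exact bot_le
  | succ k ih =>
    intro m hm hm2
    rw [← mhs_d2 h m p]
    refine sup_le (sup_le ?_ ?_) ?_
    · exact le_sup_of_le_left (inf_le_inf_left _ (wc_mono h hm))
    · refine le_sup_of_le_right ?_
      have he : (F (m - p + 1) ⊓ (W m).baseChange ℂ).map (sigmaC V) =
          (F (n - p - (n - m) + 1) ⊓ (W (n - (n - m))).baseChange ℂ).map (sigmaC V) := by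
        rw [show n - p - (n - m) + 1 = m - p + 1 by omega, show n - (n - m) = m by omega]
      rw [he]
      exact le_iSup₂ (f := fun (j : ℤ) (_ : 1 ≤ j) =>
        (F (n - p - j + 1) ⊓ (W (n - j)).baseChange ℂ).map (sigmaC V)) (n - m) (by omega)
    · exact ih (m - 1) (by omega) (by omega)


lemma h1_lemma (h : IsMixedHodgeStructure V W F) (n p : ℤ) :
    ((F p ⊓ (W n).baseChange ℂ) ⊔ (W (n - 1)).baseChange ℂ) ⊓
        ((F (n - p) ⊓ (W n).baseChange ℂ).map (sigmaC V) ⊔ (W (n - 1)).baseChange ℂ) ≤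
      Ide W F n p ⊔ (W (n - 1)).baseChange ℂ := by
  intro x hx
  rw [Submodule.mem_inf] at hx
  obtain ⟨hx1, hx2⟩ := hx
  rw [Submodule.mem_sup] at hx1 hx2
  obtain ⟨a, ha, w1, hw1, rfl⟩ := hx1
  obtain ⟨b, hb, w2, hw2, hx⟩ := hx2
  have hu : a - b ∈ (W (n - 1)).baseChange ℂ := by
    have hab : a - b = w2 - w1 := by
      rw [sub_eq_sub_iff_add_eq_add, ← hx]
      exact add_comm _ _
    rw [hab]; exact sub_mem hw2 hw1
  have hkey := key_lemma h n p (n - 1) le_rfl hu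
  rw [Submodule.mem_sup] at hkey
  obtain ⟨u1, hu1, v, hv, huv⟩ := hkey
  have hsplit : (⨆ j : ℤ, ⨆ _ : 1 ≤ j,
        (F (n - p - j + 1) ⊓ (W (n - j)).baseChange ℂ).map (sigmaC V)) ≤
      (F (n - p) ⊓ (W n).baseChange ℂ).map (sigmaC V) ⊔
        ⨆ j : ℤ, ⨆ _ : 2 ≤ j, (F (n - p - j + 1) ⊓ (W (n - j)).baseChange ℂ).map (sigmaC V) := by
    refine iSup₂_le fun j hj => ?_
    rcases eq_or_lt_of_le hj with hj1 | hj2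
    · refine le_sup_of_le_left (Submodule.map_mono (inf_le_inf ?_ ?_))
      · exact le_of_eq (by rw [show n - p - j + 1 = n - p by omega])
      · exact wc_mono h (by omega)
    · refine le_sup_of_le_right ?_
      exact le_iSup₂ (f := fun (j : ℤ) (_ : 2 ≤ j) =>
        (F (n - p - j + 1) ⊓ (W (n - j)).baseChange ℂ).map (sigmaC V)) j (by omega)
  have hy : a - u1 ∈ Ide W F n p := by
    refine ⟨⟨?_, ?_⟩, ?_⟩
    · exact sub_mem ha.1 hu1.1
    · exact sub_mem ha.2 (wc_mono h (by omega) hu1.2)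
    · have hav : a - u1 = b + v := by
        have h' : v = a - b - u1 := by rw [← huv]; abel
        rw [h']; abel
      rw [hav]
      exact add_mem (Submodule.mem_sup_left hb) (hsplit hv)
  refine Submodule.mem_sup.mpr ⟨a - u1, hy, u1 + w1, add_mem hu1.2 hw1, by abel⟩

lemma Ide_inf_wc_eq_bot (h : IsMixedHodgeStructure V W F) (n p : ℤ) :
    Ide W F n p ⊓ (W (n - 1)).baseChange ℂ = ⊥ := by
  obtain ⟨aW, haW⟩ := h.2.1
  rw [eq_bot_iff]
  intro x hx
  rw [Submodule.mem_inf] at hx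
  obtain ⟨hxI, hxW⟩ := hx
  have claim : ∀ k : ℕ, x ∈ (W (n - 1 - k)).baseChange ℂ := by
    intro k
    induction k with
    | zero => simpa using hxW
    | succ k ih =>
      have hxF : x ∈ F p := hxI.1.1
      have hxS := hxI.2
      have hsplit : (F (n - p) ⊓ (W n).baseChange ℂ).map (sigmaC V) ⊔
          (⨆ j : ℤ, ⨆ _ : 2 ≤ j,
            (F (n - p - j + 1) ⊓ (W (n - j)).baseChange ℂ).map (sigmaC V)) ≤
          ((F (n - p) ⊓ (W n).baseChange ℂ).map (sigmaC V) ⊔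
            ⨆ j : ℤ, ⨆ _ : 2 ≤ j ∧ j ≤ (k : ℤ) + 1,
              (F (n - p - j + 1) ⊓ (W (n - j)).baseChange ℂ).map (sigmaC V)) ⊔
          (⨆ j : ℤ, ⨆ _ : (k : ℤ) + 2 ≤ j,
              (F (n - p - j + 1) ⊓ (W (n - j)).baseChange ℂ).map (sigmaC V)) := by
        refine sup_le (le_sup_of_le_left le_sup_left) (iSup₂_le fun j hj => ?_)
        by_cases hjk : j ≤ (k : ℤ) + 1
        · refine le_sup_of_le_left (le_sup_of_le_right ?_)
          exact le_iSup₂ (f := fun (j : ℤ) (_ : 2 ≤ j ∧ j ≤ (k : ℤ) + 1) =>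
            (F (n - p - j + 1) ⊓ (W (n - j)).baseChange ℂ).map (sigmaC V)) j ⟨hj, hjk⟩
        · refine le_sup_of_le_right ?_
          exact le_iSup₂ (f := fun (j : ℤ) (_ : (k : ℤ) + 2 ≤ j) =>
            (F (n - p - j + 1) ⊓ (W (n - j)).baseChange ℂ).map (sigmaC V)) j (by omega)
      have hx' := hsplit hxS
      rw [Submodule.mem_sup] at hx'
      obtain ⟨y, hy, z, hz, hyz⟩ := hx'
      have hzW : z ∈ (W (n - 1 - k - 1)).baseChange ℂ := by
        refine (iSup₂_le fun j hj => ?_ :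
          (⨆ j : ℤ, ⨆ _ : (k : ℤ) + 2 ≤ j,
              (F (n - p - j + 1) ⊓ (W (n - j)).baseChange ℂ).map (sigmaC V)) ≤
            (W (n - 1 - k - 1)).baseChange ℂ) hz
        exact (map_sigma_le_baseChange inf_le_right).trans (wc_mono h (by omega))
      have hyW : y ∈ (W (n - 1 - k)).baseChange ℂ := by
        rw [eq_sub_of_add_eq hyz]
        exact sub_mem ih (wc_mono h (by omega) hzW)
      have hyF : y ∈ (F (n - p - k) ⊓ (W n).baseChange ℂ).map (sigmaC V) := by
        refine (sup_le (Submodule.map_mono (inf_le_inf_right _ (mhs_fanti h (by omega))))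
          (iSup₂_le fun j hj => Submodule.map_mono
            (inf_le_inf (mhs_fanti h (by omega)) (wc_mono h (by omega)))) :
          _ ≤ (F (n - p - k) ⊓ (W n).baseChange ℂ).map (sigmaC V)) hy
      have hyS : y ∈ (F (n - p - k) ⊓ (W (n - 1 - k)).baseChange ℂ).map (sigmaC V) := by
        have := map_sigma_inf_wc (F (n - p - k) ⊓ (W n).baseChange ℂ) (W (n - 1 - k)) ⟨hyF, hyW⟩
        refine Submodule.map_mono ?_ this
        exact le_inf (inf_le_left.trans inf_le_left) inf_le_right
      have hd1 := mhs_d1 h (n - 1 - k) p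
      have hxm : x ∈ (W (n - 1 - k - 1)).baseChange ℂ := by
        rw [← hd1]
        constructor
        · exact Submodule.mem_sup_left ⟨hxF, ih⟩
        · refine Submodule.mem_sup.mpr ⟨y, ?_, z, hzW, hyz⟩
          rw [show n - 1 - k - p + 1 = n - p - k by omega]
          exact hyS
      rw [show n - 1 - (k + 1 : ℕ) = n - 1 - k - 1 by push_cast; ring]
      exact hxm
  have hfin := claim (n - 1 - aW).toNat
  rw [haW _ (by omega), Submodule.baseChange_bot] at hfin
  simpa using hfin

lemma Ide_eq_bot_of_small (h : IsMixedHodgeStructure V W F) {aW bF : ℤ}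
    (haW : ∀ m ≤ aW, W m = ⊥) (hbF : ∀ r ≥ bF, F r = ⊥) {n p : ℤ}
    (hp : p ≤ aW - bF + 1) : Ide W F n p = ⊥ := by
  rw [eq_bot_iff]
  by_cases hn : n ≤ aW
  · refine (Ide_le_Wc n p).trans ?_
    rw [haW n hn, Submodule.baseChange_bot]
  · refine (inf_le_right : Ide W F n p ≤ _).trans ?_
    refine sup_le ?_ (iSup₂_le fun j hj => ?_)
    · rw [hbF (n - p) (by omega), bot_inf_eq, Submodule.map_bot]
    · by_cases hj2 : n - p - j + 1 ≥ bF
      · rw [hbF _ hj2, bot_inf_eq, Submodule.map_bot]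
      · rw [haW (n - j) (by omega), Submodule.baseChange_bot, inf_bot_eq, Submodule.map_bot]

lemma k1_lemma (h : IsMixedHodgeStructure V W F) (n : ℤ) :
    (W n).baseChange ℂ ≤ Usub W F n ⊔ (W (n - 1)).baseChange ℂ := by
  obtain ⟨aF, haF⟩ := h.2.2.2.2.1
  obtain ⟨bF, hbF⟩ := h.2.2.2.2.2.1
  have step : ∀ k : ℕ, F (bF - k) ⊓ (W n).baseChange ℂ ≤
      Usub W F n ⊔ (W (n - 1)).baseChange ℂ := by
    intro k
    induction k with
    | zero =>
      rw [show bF - ((0 : ℕ) : ℤ) = bF by omega, hbF bF le_rfl, bot_inf_eq]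
      exact bot_le
    | succ k ih =>
      intro x hx
      rw [Submodule.mem_inf] at hx
      obtain ⟨hxF, hxW⟩ := hx
      set p : ℤ := bF - (k + 1 : ℕ) with hpdef
      have hd2 := mhs_d2 h n (p + 1)
      have hx' : x ∈ (F (p + 1) ⊓ (W n).baseChange ℂ) ⊔
          ((F (n - (p + 1) + 1) ⊓ (W n).baseChange ℂ).map (sigmaC V)) ⊔
          (W (n - 1)).baseChange ℂ := by rw [hd2]; exact hxW
      rw [Submodule.mem_sup] at hx'
      obtain ⟨yz, hyz, w, hw, hxw⟩ := hx'
      rw [Submodule.mem_sup] at hyz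
      obtain ⟨y, hy, z, hz, hyzw⟩ := hyz
      have hz' : z ∈ (F (n - p) ⊓ (W n).baseChange ℂ).map (sigmaC V) := by
        rwa [show n - (p + 1) + 1 = n - p by omega] at hz
      have hzmem : z ∈ ((F p ⊓ (W n).baseChange ℂ) ⊔ (W (n - 1)).baseChange ℂ) ⊓
          ((F (n - p) ⊓ (W n).baseChange ℂ).map (sigmaC V) ⊔ (W (n - 1)).baseChange ℂ) := by
        rw [Submodule.mem_inf]
        constructor
        · have hze : z = x - y - w := by
            have h1 : yz = y + z := hyzw.symm
            have h2 : x = yz + w := hxw.symm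
            rw [h2, h1]; abel
          rw [hze]
          refine sub_mem (sub_mem (Submodule.mem_sup_left (Submodule.mem_inf.mpr ⟨hxF, hxW⟩)) ?_)
            (Submodule.mem_sup_right hw)
          refine Submodule.mem_sup_left ?_
          exact Submodule.mem_inf.mpr
            ⟨mhs_fanti h (by omega) (Submodule.mem_inf.mp hy).1, (Submodule.mem_inf.mp hy).2⟩
        · exact Submodule.mem_sup_left hz'
      have hz2 : z ∈ Usub W F n ⊔ (W (n - 1)).baseChange ℂ := by
        refine (sup_le (le_sup_of_le_left (le_iSup (fun p => Ide W F n p) p)) le_sup_right)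
          (h1_lemma h n p hzmem)
      have hy2 : y ∈ Usub W F n ⊔ (W (n - 1)).baseChange ℂ := by
        refine ih ?_
        rwa [show bF - (k : ℕ) = p + 1 by rw [hpdef]; push_cast; ring]
      have hxe : x = y + z + w := by rw [← hyzw] at hxw; rw [← hxw]
      rw [hxe]
      exact add_mem (add_mem hy2 hz2) (Submodule.mem_sup_right hw)
  intro x hx
  refine step (bF - aF).toNat ?_
  rw [Submodule.mem_inf, haF (bF - (bF - aF).toNat) (by omega)]
  exact ⟨trivial, hx⟩

lemma k2_lemma (h : IsMixedHodgeStructure V W F) (n : ℤ) :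
    Usub W F n ⊓ (W (n - 1)).baseChange ℂ = ⊥ := by
  obtain ⟨aW, haW⟩ := h.2.1
  obtain ⟨bF, hbF⟩ := h.2.2.2.2.2.1
  have claim : ∀ k : ℕ, (⨆ p : ℤ, ⨆ _ : bF - k ≤ p, Ide W F n p) ⊓
      (W (n - 1)).baseChange ℂ = ⊥ := by
    intro k
    induction k with
    | zero =>
      have : (⨆ p : ℤ, ⨆ _ : bF - (0 : ℕ) ≤ p, Ide W F n p) = ⊥ := by
        refine le_bot_iff.mp (iSup₂_le fun p hp => ?_)
        refine (Ide_le_F n p).trans ?_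
        rw [hbF p (by omega)]
      rw [this, bot_inf_eq]
    | succ k ih =>
      rw [eq_bot_iff]
      intro x hx
      rw [Submodule.mem_inf] at hx
      obtain ⟨hxU, hxW⟩ := hx
      set p1 : ℤ := bF - (k + 1 : ℕ) with hp1def
      have hsplit : (⨆ p : ℤ, ⨆ _ : bF - (k + 1 : ℕ) ≤ p, Ide W F n p) ≤
          Ide W F n p1 ⊔ ⨆ p : ℤ, ⨆ _ : bF - (k : ℕ) ≤ p, Ide W F n p := by
        refine iSup₂_le fun p hp => ?_
        by_cases hpp : bF - (k : ℕ) ≤ p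
        · exact le_sup_of_le_right (le_iSup₂ (f := fun (p : ℤ) (_ : bF - (k : ℕ) ≤ p) =>
            Ide W F n p) p hpp)
        · have : p = p1 := by rw [hp1def]; push_cast at hp hpp ⊢; omega
          rw [this]
          exact le_sup_left
      have hx' := hsplit hxU
      rw [Submodule.mem_sup] at hx'
      obtain ⟨y, hy, z, hz, hyz⟩ := hx'
      have hzF : z ∈ F (p1 + 1) ⊓ (W n).baseChange ℂ := by
        refine (iSup₂_le fun p hp => le_inf ((Ide_le_F n p).trans
          (mhs_fanti h (by push_cast at hp ⊢; omega))) (Ide_le_Wc n p) :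
          _ ≤ F (p1 + 1) ⊓ (W n).baseChange ℂ) hz
      have hy1 : y ∈ (F (n - p1) ⊓ (W n).baseChange ℂ).map (sigmaC V) ⊔
          (W (n - 1)).baseChange ℂ := Ide_le_sigma_sup h n p1 hy
      have hy2 : y ∈ (F (p1 + 1) ⊓ (W n).baseChange ℂ) ⊔ (W (n - 1)).baseChange ℂ := by
        have hye : y = x - z := by
          rw [← hyz]; abel
        rw [hye]
        exact sub_mem (Submodule.mem_sup_right hxW) (Submodule.mem_sup_left hzF)
      have hd1 := mhs_d1 h n (p1 + 1)
      have hyW : y ∈ (W (n - 1)).baseChange ℂ := by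
        rw [← hd1, Submodule.mem_inf]
        refine ⟨hy2, ?_⟩
        rwa [show n - (p1 + 1) + 1 = n - p1 by omega]
      have hy0 : y = 0 := by
        have := Ide_inf_wc_eq_bot h n p1
        have hm : y ∈ Ide W F n p1 ⊓ (W (n - 1)).baseChange ℂ :=
          Submodule.mem_inf.mpr ⟨hy, hyW⟩
        rw [this] at hm
        simpa using hm
      have hxz : x = z := by rw [← hyz, hy0, zero_add]
      have : x ∈ (⨆ p : ℤ, ⨆ _ : bF - (k : ℕ) ≤ p, Ide W F n p) ⊓
          (W (n - 1)).baseChange ℂ := by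
        rw [Submodule.mem_inf]
        exact ⟨hxz ▸ hz, hxW⟩
      rw [ih] at this
      simpa using this
  set k0 : ℕ := (bF - (aW - bF + 2)).toNat with hk0
  have hU : Usub W F n ≤ ⨆ p : ℤ, ⨆ _ : bF - k0 ≤ p, Ide W F n p := by
    refine iSup_le fun p => ?_
    by_cases hp : bF - (k0 : ℤ) ≤ p
    · exact le_iSup₂ (f := fun (p : ℤ) (_ : bF - (k0 : ℤ) ≤ p) => Ide W F n p) p hp
    · rw [Ide_eq_bot_of_small h haW hbF (by omega)]
      exact bot_le
  rw [eq_bot_iff]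
  refine le_trans (inf_le_inf_right _ hU) ?_
  exact le_of_eq (claim k0)

lemma Usub_le_Wc (n : ℤ) : Usub W F n ≤ (W n).baseChange ℂ :=
  iSup_le fun p => Ide_le_Wc n p

lemma Usub_eq_bot_of_large (h : IsMixedHodgeStructure V W F) {bW : ℤ}
    (hbW : ∀ m ≥ bW, W m = ⊤) {m : ℤ} (hm : bW + 1 ≤ m) : Usub W F m = ⊥ := by
  have h2 := k2_lemma h m
  rwa [hbW (m - 1) (by omega), Submodule.baseChange_top, inf_top_eq] at h2

lemma Tsub_le (h : IsMixedHodgeStructure V W F) {bW : ℤ} (hbW : ∀ m ≥ bW, W m = ⊤)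
    {n : ℤ} (hn : bW + 1 ≤ n) : Tsub W F n = ⊥ := by
  refine le_bot_iff.mp (iSup₂_le fun m hm => ?_)
  rw [Usub_eq_bot_of_large h hbW (by omega)]

lemma Tsub_split (n : ℤ) : Tsub W F n = Usub W F n ⊔ Tsub W F (n + 1) := by
  refine le_antisymm (iSup₂_le fun m hm => ?_) (sup_le ?_ (iSup₂_le fun m hm => ?_))
  · rcases eq_or_lt_of_le hm with h1 | h2
    · rw [← h1]; exact le_sup_left
    · exact le_sup_of_le_right (le_iSup₂ (f := fun (m : ℤ) (_ : n + 1 ≤ m) => Usub W F m) m h2)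
  · exact le_iSup₂ (f := fun (m : ℤ) (_ : n ≤ m) => Usub W F m) n le_rfl
  · exact le_iSup₂ (f := fun (m : ℤ) (_ : n ≤ m) => Usub W F m) m (by omega)

lemma Usub_le_Tsub {n m : ℤ} (hnm : n ≤ m) : Usub W F m ≤ Tsub W F n :=
  le_iSup₂ (f := fun (m : ℤ) (_ : n ≤ m) => Usub W F m) m hnm

lemma l1_lemma (h : IsMixedHodgeStructure V W F) (n : ℤ) :
    (W n).baseChange ℂ ⊔ Tsub W F (n + 1) = ⊤ := by
  obtain ⟨bW, hbW⟩ := h.2.2.1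
  have step : ∀ k : ℕ, (W (n + k)).baseChange ℂ ≤ (W n).baseChange ℂ ⊔ Tsub W F (n + 1) := by
    intro k
    induction k with
    | zero =>
      rw [show n + ((0 : ℕ) : ℤ) = n by omega]
      exact le_sup_left
    | succ k ih =>
      have hk1 := k1_lemma h (n + (k + 1 : ℕ))
      refine hk1.trans (sup_le ?_ ?_)
      · exact le_sup_of_le_right (Usub_le_Tsub (by push_cast; omega))
      · rw [show n + ((k + 1 : ℕ) : ℤ) - 1 = n + (k : ℕ) by push_cast; ring]
        exact ih
  rw [eq_top_iff]
  have := step (bW - n).toNat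
  rw [hbW (n + (bW - n).toNat) (by omega), Submodule.baseChange_top] at this
  exact this

lemma l2_lemma (h : IsMixedHodgeStructure V W F) (n : ℤ) :
    (W n).baseChange ℂ ⊓ Tsub W F (n + 1) = ⊥ := by
  obtain ⟨bW, hbW⟩ := h.2.2.1
  have step : ∀ k : ℕ, (W (bW - k)).baseChange ℂ ⊓ Tsub W F (bW - k + 1) = ⊥ := by
    intro k
    induction k with
    | zero =>
      rw [Tsub_le h hbW (by omega), inf_bot_eq]
    | succ k ih =>
      set m : ℤ := bW - (k + 1 : ℕ) with hmdef
      rw [eq_bot_iff]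
      intro x hx
      rw [Submodule.mem_inf] at hx
      obtain ⟨hxW, hxT⟩ := hx
      rw [Tsub_split] at hxT
      rw [Submodule.mem_sup] at hxT
      obtain ⟨u, hu, t, ht, hut⟩ := hxT
      have ht0 : t = 0 := by
        have htW : t ∈ (W (m + 1)).baseChange ℂ := by
          have hte : t = x - u := by rw [← hut]; abel
          rw [hte]
          exact sub_mem (wc_mono h (by omega) hxW)
            (Usub_le_Wc (m + 1) hu)
        have htm : t ∈ (W (m + 1)).baseChange ℂ ⊓ Tsub W F (m + 1 + 1) :=
          Submodule.mem_inf.mpr ⟨htW, ht⟩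
        have hih : (W (m + 1)).baseChange ℂ ⊓ Tsub W F (m + 1 + 1) = ⊥ := by
          have : m + 1 = bW - (k : ℕ) := by rw [hmdef]; push_cast; ring
          rw [this]
          exact ih
        rw [hih] at htm
        simpa using htm
      have hxu : x = u := by rw [← hut, ht0, add_zero]
      have : x ∈ Usub W F (m + 1) ⊓ (W (m + 1 - 1)).baseChange ℂ := by
        rw [Submodule.mem_inf]
        exact ⟨hxu ▸ hu, by rwa [show m + 1 - 1 = m by omega]⟩
      rw [k2_lemma h (m + 1)] at this
      simpa using this
  by_cases hn : n ≥ bW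
  · rw [Tsub_le h hbW (by omega), inf_bot_eq]
  · have := step (bW - n).toNat
    rwa [show bW - ((bW - n).toNat : ℤ) = n by omega] at this

end Deligne

section Functorial
variable {A B : Type*} [AddCommGroup A] [Module ℝ A] [AddCommGroup B] [Module ℝ B]

lemma fc_sigma (f : A →ₗ[ℝ] B) (x : ℂ ⊗[ℝ] A) :
    f.baseChange ℂ (sigmaC A x) = sigmaC B (f.baseChange ℂ x) := by
  induction x using TensorProduct.induction_on with
  | zero => simp
  | tmul z v => simp [sigmaC_tmul, LinearMap.baseChange_tmul]
  | add x y hx hy => rw [map_add, map_add, map_add, map_add, hx, hy]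

lemma fc_mem_baseChange (f : A →ₗ[ℝ] B) {p : Submodule ℝ A} {q : Submodule ℝ B}
    (hpq : ∀ x ∈ p, f x ∈ q) {x : ℂ ⊗[ℝ] A} (hx : x ∈ p.baseChange ℂ) :
    f.baseChange ℂ x ∈ q.baseChange ℂ := by
  rw [Submodule.baseChange_eq_span] at hx
  induction hx using Submodule.span_induction with
  | mem y hy =>
    obtain ⟨v, hv, rfl⟩ := hy
    rw [show ((TensorProduct.mk ℝ ℂ A) 1) v = (1 : ℂ) ⊗ₜ[ℝ] v from rfl,
      LinearMap.baseChange_tmul]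
    exact Submodule.tmul_mem_baseChange_of_mem _ (hpq v hv)
  | zero => simp
  | add a b _ _ ha hb => rw [map_add]; exact add_mem ha hb
  | smul c a _ ha => rw [map_smul]; exact Submodule.smul_mem _ _ ha

variable {WA : ℤ → Submodule ℝ A} {FA : ℤ → Submodule ℂ (ℂ ⊗[ℝ] A)}
variable {WB : ℤ → Submodule ℝ B} {FB : ℤ → Submodule ℂ (ℂ ⊗[ℝ] B)}
variable {f : A →ₗ[ℝ] B}

lemma map_fc_sigma_piece (hfW : ∀ n : ℤ, ∀ x ∈ WA n, f x ∈ WB n)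
    (hfF : ∀ p : ℤ, (FA p).map (f.baseChange ℂ) ≤ FB p) (q m : ℤ) :
    ((FA q ⊓ (WA m).baseChange ℂ).map (sigmaC A)).map (f.baseChange ℂ) ≤
      (FB q ⊓ (WB m).baseChange ℂ).map (sigmaC B) := by
  rintro x ⟨y, ⟨z, hz0, rfl⟩, rfl⟩
  have hz : z ∈ FA q ⊓ (WA m).baseChange ℂ := hz0
  rw [Submodule.mem_inf] at hz
  refine ⟨f.baseChange ℂ z, ?_, (fc_sigma f z).symm⟩
  exact Submodule.mem_inf.mpr ⟨hfF q ⟨z, hz.1, rfl⟩, fc_mem_baseChange f (hfW m) hz.2⟩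

lemma map_fc_Ide (hfW : ∀ n : ℤ, ∀ x ∈ WA n, f x ∈ WB n)
    (hfF : ∀ p : ℤ, (FA p).map (f.baseChange ℂ) ≤ FB p) (n p : ℤ) :
    (Ide WA FA n p).map (f.baseChange ℂ) ≤ Ide WB FB n p := by
  refine le_inf (le_inf ?_ ?_) ?_
  · exact (Submodule.map_mono (Ide_le_F n p)).trans (hfF p)
  · refine (Submodule.map_mono (Ide_le_Wc n p)).trans ?_
    rintro x ⟨y, hy, rfl⟩
    exact fc_mem_baseChange f (hfW n) hy
  · refine (Submodule.map_mono (inf_le_right :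
      Ide WA FA n p ≤ (FA (n - p) ⊓ (WA n).baseChange ℂ).map (sigmaC A) ⊔
        ⨆ j : ℤ, ⨆ _ : 2 ≤ j,
          (FA (n - p - j + 1) ⊓ (WA (n - j)).baseChange ℂ).map (sigmaC A))).trans ?_
    rw [Submodule.map_sup]
    refine sup_le (le_sup_of_le_left (map_fc_sigma_piece hfW hfF _ _)) ?_
    rw [Submodule.map_iSup]
    refine iSup_le fun j => ?_
    rw [Submodule.map_iSup]
    refine iSup_le fun hj => ?_
    refine le_sup_of_le_right ?_
    exact le_trans (map_fc_sigma_piece hfW hfF _ _)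
      (le_iSup₂ (f := fun (j : ℤ) (_ : 2 ≤ j) =>
        (FB (n - p - j + 1) ⊓ (WB (n - j)).baseChange ℂ).map (sigmaC B)) j hj)

lemma map_fc_Tsub (hfW : ∀ n : ℤ, ∀ x ∈ WA n, f x ∈ WB n)
    (hfF : ∀ p : ℤ, (FA p).map (f.baseChange ℂ) ≤ FB p) (n : ℤ) :
    (Tsub WA FA n).map (f.baseChange ℂ) ≤ Tsub WB FB n := by
  rw [Tsub, Submodule.map_iSup]
  refine iSup_le fun m => ?_
  rw [Submodule.map_iSup]
  refine iSup_le fun hm => ?_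
  rw [Usub, Submodule.map_iSup]
  refine iSup_le fun p => ?_
  refine le_trans (map_fc_Ide hfW hfF m p) ?_
  refine le_trans (le_iSup (fun p => Ide WB FB m p) p) ?_
  exact Usub_le_Tsub hm

lemma strict_complex (hA : IsMixedHodgeStructure A WA FA) (hB : IsMixedHodgeStructure B WB FB)
    (hfW : ∀ n : ℤ, ∀ x ∈ WA n, f x ∈ WB n)
    (hfF : ∀ p : ℤ, (FA p).map (f.baseChange ℂ) ≤ FB p) (n : ℤ)
    {x : ℂ ⊗[ℝ] B} (hx : x ∈ (WB n).baseChange ℂ) (y : ℂ ⊗[ℝ] A)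
    (hy : f.baseChange ℂ y = x) :
    ∃ y' ∈ (WA n).baseChange ℂ, f.baseChange ℂ y' = x := by
  have hyT : y ∈ (WA n).baseChange ℂ ⊔ Tsub WA FA (n + 1) := by
    rw [l1_lemma hA n]; trivial
  rw [Submodule.mem_sup] at hyT
  obtain ⟨y1, hy1, y2, hy2, hyy⟩ := hyT
  have h2W : f.baseChange ℂ y2 ∈ (WB n).baseChange ℂ := by
    have he : f.baseChange ℂ y2 = x - f.baseChange ℂ y1 := by
      rw [← hy, ← hyy, map_add]; abel
    rw [he]
    exact sub_mem hx (fc_mem_baseChange f (hfW n) hy1)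
  have h2T : f.baseChange ℂ y2 ∈ Tsub WB FB (n + 1) :=
    map_fc_Tsub hfW hfF (n + 1) ⟨y2, hy2, rfl⟩
  have h20 : f.baseChange ℂ y2 = 0 := by
    have hm : f.baseChange ℂ y2 ∈ (WB n).baseChange ℂ ⊓ Tsub WB FB (n + 1) :=
      Submodule.mem_inf.mpr ⟨h2W, h2T⟩
    rw [l2_lemma hB n] at hm
    simpa using hm
  refine ⟨y1, hy1, ?_⟩
  rw [← hy, ← hyy, map_add, h20, add_zero]

lemma strict_real (hA : IsMixedHodgeStructure A WA FA) (hB : IsMixedHodgeStructure B WB FB)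
    (hfW : ∀ n : ℤ, ∀ x ∈ WA n, f x ∈ WB n)
    (hfF : ∀ p : ℤ, (FA p).map (f.baseChange ℂ) ≤ FB p) (n : ℤ)
    {b : B} (hb : b ∈ WB n) (a : A) (hab : f a = b) :
    ∃ a' ∈ WA n, f a' = b := by
  have h1 : (1 : ℂ) ⊗ₜ[ℝ] b ∈ (WB n).baseChange ℂ :=
    Submodule.tmul_mem_baseChange_of_mem _ hb
  have h2 : f.baseChange ℂ ((1 : ℂ) ⊗ₜ[ℝ] a) = (1 : ℂ) ⊗ₜ[ℝ] b := by
    rw [LinearMap.baseChange_tmul, hab]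
  obtain ⟨y', hy', hfy'⟩ := strict_complex hA hB hfW hfF n h1 _ h2
  obtain ⟨v, hv, w, hw, rfl⟩ := mem_baseChange_iff_exists.mp hy'
  refine ⟨v, hv, ?_⟩
  have heq : (1 : ℂ) ⊗ₜ[ℝ] (f v) + Complex.I ⊗ₜ[ℝ] (f w) = (1 : ℂ) ⊗ₜ[ℝ] b := by
    rw [← hfy', map_add, LinearMap.baseChange_tmul, LinearMap.baseChange_tmul]
  let reV : ℂ ⊗[ℝ] B →ₗ[ℝ] B :=
    (TensorProduct.lid ℝ B).toLinearMap.comp (Complex.reLm.rTensor B)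
  have := congrArg reV heq
  simpa [reV, LinearMap.rTensor_tmul, TensorProduct.lid_tmul, Complex.reLm_coe] using this

end Functorial

/-- The linear map `Gr^W_n(f) : W_n A / W_{n-1} A → W_n B / W_{n-1} B` induced by a filtered
linear map `f : A → B`, sending the class of `x` to the class of `f x`. -/
noncomputable def grW {A B : Type*} [AddCommGroup A] [Module ℝ A] [AddCommGroup B] [Module ℝ B]
    (WA : ℤ → Submodule ℝ A) (WB : ℤ → Submodule ℝ B) (f : A →ₗ[ℝ] B)
    (hf : ∀ n : ℤ, ∀ x ∈ WA n, f x ∈ WB n) (n : ℤ) :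
    (↥(WA n) ⧸ (WA (n - 1)).comap (WA n).subtype) →ₗ[ℝ]
      (↥(WB n) ⧸ (WB (n - 1)).comap (WB n).subtype) :=
  Submodule.mapQ _ _ (f.restrict (fun x hx => hf n x hx))
    (fun x hx => hf (n - 1) x.1 hx)

/-- exactness of `Gr^W_n`. If `f : A → B` and `g : B → C` are morphisms
of mixed Hodge structures with `range f = ker g`, then for every `n` the induced maps on
`Gr^W_n := W_n / W_{n-1}` satisfy `range (Gr^W_n f) = ker (Gr^W_n g)`. -/
theorem grW_exact (A B C : Type*)
    [AddCommGroup A] [Module ℝ A] [FiniteDimensional ℝ A]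
    [AddCommGroup B] [Module ℝ B] [FiniteDimensional ℝ B]
    [AddCommGroup C] [Module ℝ C] [FiniteDimensional ℝ C]
    (WA : ℤ → Submodule ℝ A) (FA : ℤ → Submodule ℂ (ℂ ⊗[ℝ] A))
    (WB : ℤ → Submodule ℝ B) (FB : ℤ → Submodule ℂ (ℂ ⊗[ℝ] B))
    (WC : ℤ → Submodule ℝ C) (FC : ℤ → Submodule ℂ (ℂ ⊗[ℝ] C))
    (hA : IsMixedHodgeStructure A WA FA) (hB : IsMixedHodgeStructure B WB FB)
    (hC : IsMixedHodgeStructure C WC FC)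
    (f : A →ₗ[ℝ] B) (g : B →ₗ[ℝ] C)
    (hfW : ∀ n : ℤ, ∀ x ∈ WA n, f x ∈ WB n)
    (hfF : ∀ p : ℤ, (FA p).map (f.baseChange ℂ) ≤ FB p)
    (hgW : ∀ n : ℤ, ∀ x ∈ WB n, g x ∈ WC n)
    (hgF : ∀ p : ℤ, (FB p).map (g.baseChange ℂ) ≤ FC p)
    (hexact : LinearMap.range f = LinearMap.ker g) :
    ∀ n : ℤ, LinearMap.range (grW WA WB f hfW n) = LinearMap.ker (grW WB WC g hgW n) := by
  intro n
  apply le_antisymm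
  · rintro ξ ⟨η, rfl⟩
    obtain ⟨x, rfl⟩ := Submodule.Quotient.mk_surjective _ η
    rw [LinearMap.mem_ker, grW, grW]
    erw [Submodule.mapQ_apply, Submodule.Quotient.mk_eq_zero]
    rw [Submodule.mem_comap]
    have h0 : g (f x.1) = 0 := by
      have : f x.1 ∈ LinearMap.ker g := hexact ▸ LinearMap.mem_range_self f x.1
      exact LinearMap.mem_ker.mp this
    have : ((g.restrict fun x hx => hgW n x hx)
        ((f.restrict fun x hx => hfW n x hx) x)).1 = g (f x.1) := rfl
    rw [Submodule.subtype_apply, this, h0]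
    exact zero_mem _
  · intro ξ hξ
    obtain ⟨x, rfl⟩ := Submodule.Quotient.mk_surjective _ ξ
    rw [LinearMap.mem_ker, grW] at hξ
    erw [Submodule.mapQ_apply, Submodule.Quotient.mk_eq_zero,
      Submodule.mem_comap] at hξ
    have hgx : g x.1 ∈ WC (n - 1) := hξ
    obtain ⟨y, hyW, hyg⟩ := strict_real hB hC hgW hgF (n - 1) hgx x.1 rfl
    have hker : x.1 - y ∈ LinearMap.range f := by
      rw [hexact, LinearMap.mem_ker, map_sub, hyg, sub_self]
    obtain ⟨a, ha⟩ := hker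
    have hxyW : x.1 - y ∈ WB n := sub_mem x.2 (hB.1 (by omega) hyW)
    obtain ⟨a', ha'W, ha'f⟩ := strict_real hA hB hfW hfF n hxyW a ha
    refine ⟨Submodule.Quotient.mk ⟨a', ha'W⟩, ?_⟩
    rw [grW]
    erw [Submodule.mapQ_apply]
    rw [Submodule.Quotient.eq]
    rw [Submodule.mem_comap]
    have : ((f.restrict fun x hx => hfW n x hx) ⟨a', ha'W⟩ - x).1 = f a' - x.1 := rfl
    rw [Submodule.subtype_apply, this, ha'f]
    have : x.1 - y - x.1 = -y := by abel
    rw [this]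
    exact neg_mem hyW
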